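/- Let d, r > 0 be integers with d dividing q−1. Suppose q = q_0^m where q_0 is a prime power with q_0 ≡ 1 (mod d) and d divides m, and let h be a polynomial with coefficients in the subfield F_{q_0} of F_q of order q_0. Then f(x) := x^r · h(x^{(q−1)/d}) is a permutation polynomial of F_q if and only if gcd(r, (q−1)/d) = 1 and h has no roots in μ_d. -/

import Mathlib

open Polynomial

/-- Elements satisfying `x ^ q0 = x` lie in a subfield of cardinality `q0`. -/
private lemma aux_mem_subfield {F : Type*} [Field F] [Fintype F] (K : Subfield F) {q0 : ℕ}
    (h2 : 2 ≤ q0) (hK : Nat.card K = q0) {x : F} (hx : x ^ q0 = x) : x ∈ K := by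
  classical
  have : Fintype K := Fintype.ofFinite K
  have hcard : Fintype.card K = q0 := by rw [← Nat.card_eq_fintype_card, hK]
  set p : F[X] := X ^ q0 - X with hp
  have hdeg : p.natDegree = q0 := by
    have hlt : (X : F[X]).natDegree < ((X : F[X]) ^ q0).natDegree := by
      simpa using (show 1 < q0 by omega)
    rw [hp, natDegree_sub_eq_left_of_natDegree_lt hlt, natDegree_X_pow]
  have hpne : p ≠ 0 := by
    intro h0
    rw [h0, natDegree_zero] at hdeg
    omega
  have hroot : ∀ y : F, y ^ q0 = y → y ∈ p.roots.toFinset := by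
    intro y hy
    simp only [Multiset.mem_toFinset, mem_roots hpne, IsRoot.def, hp, eval_sub, eval_pow, eval_X]
    rw [← hp, mem_roots hpne]; simp [hp, hy]
  have hcardroots : p.roots.toFinset.card ≤ q0 := by
    calc p.roots.toFinset.card ≤ Multiset.card p.roots := p.roots.toFinset_card_le
      _ ≤ p.natDegree := p.card_roots'
      _ = q0 := hdeg
  have himg : (Finset.univ.image (fun y : K => (y : F))) ⊆ p.roots.toFinset := by
    intro a ha
    obtain ⟨y, -, rfl⟩ := Finset.mem_image.mp ha
    apply hroot
    have := FiniteField.pow_card y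
    rw [hcard] at this
    exact_mod_cast congrArg (Subtype.val) this
  have hcardimg : (Finset.univ.image (fun y : K => (y : F))).card = q0 := by
    rw [Finset.card_image_of_injective _ Subtype.val_injective, Finset.card_univ, hcard]
  have heq : (Finset.univ.image (fun y : K => (y : F))) = p.roots.toFinset :=
    Finset.eq_of_subset_of_card_le himg (by omega)
  have hxr : x ∈ p.roots.toFinset := hroot x hx
  rw [← heq] at hxr
  obtain ⟨y, -, hy⟩ := Finset.mem_image.mp hxr
  rw [← hy]; exact y.2

theorem stmt_2 {F : Type*} [Field F] [Fintype F] {q q0 m d r : ℕ}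
    (hq : Fintype.card F = q) (hq0 : IsPrimePow q0) (hqm : q = q0 ^ m)
    (hcong : q0 ≡ 1 [MOD d]) (hdm : d ∣ m) (hd : 0 < d) (hr : 0 < r) (hdvd : d ∣ q - 1)
    (K : Subfield F) (hK : Nat.card K = q0) (h : F[X]) (hcoeff : ∀ i, h.coeff i ∈ K) :
    Function.Bijective (fun c : F => (X ^ r * h.comp (X ^ ((q - 1) / d))).eval c) ↔
      (Nat.gcd r ((q - 1) / d) = 1 ∧ ∀ ζ : F, ζ ^ d = 1 → h.eval ζ ≠ 0) := by
  classical
  have h2 : 2 ≤ q0 := hq0.two_le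
  have hq2 : 2 ≤ q := by rw [← hq]; exact Fintype.one_lt_card
  set s : ℕ := (q - 1) / d with hs
  have hq1 : q - 1 = d * s := (Nat.div_mul_cancel hdvd).symm.trans (mul_comm _ _)
  have hdq0 : d ∣ q0 - 1 := (Nat.modEq_iff_dvd' (by omega)).mp hcong.symm
  set T : ℕ := ∑ i ∈ Finset.range m, q0 ^ i with hT
  have hfact : q - 1 = (q0 - 1) * T := by
    have hgs : ((q0 : ℤ) - 1) * T = (q0 : ℤ) ^ m - 1 := by
      rw [hT]
      push_cast
      rw [mul_comm]
      exact geom_sum_mul (q0 : ℤ) m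
    have hz : ((q - 1 : ℕ) : ℤ) = ((q0 - 1 : ℕ) : ℤ) * T := by
      rw [Nat.cast_sub (by omega : 1 ≤ q), Nat.cast_sub (by omega : 1 ≤ q0)]
      push_cast
      rw [hgs, hqm]
      push_cast
      ring
    exact_mod_cast hz
  have hdT : d ∣ T := by
    have hint : (d : ℤ) ∣ (T : ℤ) := by
      have hsplit : (T : ℤ) = (∑ i ∈ Finset.range m, ((q0 : ℤ) ^ i - 1)) + m := by
        rw [hT]
        push_cast
        rw [Finset.sum_sub_distrib]
        simp
      rw [hsplit]
      apply dvd_add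
      · apply Finset.dvd_sum
        intro i _
        have h1 : (q0 : ℤ) - 1 ∣ (q0 : ℤ) ^ i - 1 := by
          simpa using sub_dvd_pow_sub_pow (q0 : ℤ) 1 i
        have hdz : (d : ℤ) ∣ (q0 : ℤ) - 1 := by
          have := Int.natCast_dvd_natCast.mpr hdq0
          rwa [Nat.cast_sub (by omega : 1 ≤ q0)] at this
        exact hdz.trans h1
      · exact_mod_cast Int.natCast_dvd_natCast.mpr hdm
    exact_mod_cast hint
  obtain ⟨u, hu⟩ := hdT
  have hsu : s = (q0 - 1) * u := by
    have hqd : q - 1 = d * ((q0 - 1) * u) := by rw [hfact, hu]; ring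
    rw [hs, hqd, Nat.mul_div_cancel_left _ hd]
  have hq01s : (q0 - 1) ∣ s := ⟨u, hsu⟩
  have hds : d ∣ s := hdq0.trans hq01s
  have hs0 : 0 < s := by
    rcases Nat.eq_zero_or_pos s with h0 | h0
    · rw [h0, mul_zero] at hq1; omega
    · exact h0
  have hev : ∀ c : F, (X ^ r * h.comp (X ^ ((q - 1) / d))).eval c = c ^ r * h.eval (c ^ s) := by
    intro c; simp [← hs, eval_comp]
  have hmu : ∀ ζ : F, ζ ^ d = 1 → ζ ∈ K := by
    intro ζ hζ
    apply aux_mem_subfield K h2 hK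
    have hsplit : ζ ^ q0 = ζ ^ (d * ((q0 - 1) / d)) * ζ := by
      rw [Nat.mul_div_cancel' hdq0, ← pow_succ]
      congr 1
      omega
    rw [hsplit, pow_mul, hζ, one_pow, one_mul]
  have hevalK : ∀ ζ : F, ζ ∈ K → h.eval ζ ∈ K := by
    intro ζ hζ
    rw [Polynomial.eval_eq_sum_range]
    exact Subfield.sum_mem K fun i _ => Subfield.mul_mem K (hcoeff i) (Subfield.pow_mem K hζ i)
  have hKpow : ∀ x : F, x ∈ K → x ≠ 0 → x ^ s = 1 := by
    intro x hx hx0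
    have : Fintype K := Fintype.ofFinite K
    have hcard : Fintype.card K = q0 := by rw [← Nat.card_eq_fintype_card, hK]
    have hy : (⟨x, hx⟩ : K) ≠ 0 := by
      intro h0; apply hx0
      simpa using congrArg Subtype.val h0
    have hone := FiniteField.pow_card_sub_one_eq_one (⟨x, hx⟩ : K) hy
    rw [hcard] at hone
    have hxq : x ^ (q0 - 1) = 1 := by
      simpa using congrArg Subtype.val hone
    obtain ⟨v, hv⟩ := hq01s
    rw [hv, pow_mul, hxq, one_pow]
  have hcardF : Fintype.card Fˣ = q - 1 := by rw [Fintype.card_units, hq]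
  have hmuroot : ∀ c : F, c ≠ 0 → (c ^ s) ^ d = 1 := by
    intro c hc
    rw [← pow_mul, mul_comm s d, ← hq1, ← hq]
    exact FiniteField.pow_card_sub_one_eq_one c hc
  constructor
  · rintro hbij
    obtain ⟨g, hg⟩ := IsCyclic.exists_generator (α := Fˣ)
    have hog : orderOf g = q - 1 := by
      rw [orderOf_eq_card_of_forall_mem_zpowers hg, Nat.card_eq_fintype_card, hcardF]
    constructor
    · -- gcd r s = 1
      by_contra hgcd
      set e : ℕ := Nat.gcd r s with he
      have he1 : 1 < e := by
        have : e ≠ 0 := Nat.gcd_ne_zero_left (by omega)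
        omega
      have hes : e ∣ s := Nat.gcd_dvd_right r s
      have her : e ∣ r := Nat.gcd_dvd_left r s
      have heq1 : e ∣ q - 1 := hes.trans ⟨d, by rw [hq1, mul_comm]⟩
      set k : ℕ := (q - 1) / e with hk
      have hk0 : 0 < k := Nat.div_pos (Nat.le_of_dvd (by omega) heq1) (by omega)
      have hklt : k < q - 1 := Nat.div_lt_self (by omega) he1
      set ω : Fˣ := g ^ k with hω
      have hωe : ω ^ e = 1 := by
        rw [hω, ← pow_mul, Nat.div_mul_cancel heq1, ← hog, pow_orderOf_eq_one]
      have hωeF : (ω : F) ^ e = 1 := by rw [← Units.val_pow_eq_pow_val, hωe, Units.val_one]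
      have hωr : (ω : F) ^ r = 1 := by
        obtain ⟨r', hr'⟩ := her
        rw [hr', pow_mul, hωeF, one_pow]
      have hωs : (ω : F) ^ s = 1 := by
        obtain ⟨s', hs'⟩ := hes
        rw [hs', pow_mul, hωeF, one_pow]
      have hfeq : (X ^ r * h.comp (X ^ ((q - 1) / d))).eval (ω : F) =
          (X ^ r * h.comp (X ^ ((q - 1) / d))).eval (1 : F) := by
        rw [hev, hev, hωr, hωs, one_pow, one_pow]
      have hω1 : (ω : F) = 1 := hbij.injective hfeq
      have : ω = 1 := Units.ext (by simpa using hω1)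
      have : orderOf g ∣ k := orderOf_dvd_of_pow_eq_one this
      rw [hog] at this
      have := Nat.le_of_dvd hk0 this
      omega
    · -- no roots in μ_d
      intro ζ hζd hζ0
      have hζne : ζ ≠ 0 := by
        intro h0
        rw [h0, zero_pow (by omega : d ≠ 0)] at hζd
        exact zero_ne_one hζd
      set ζu : Fˣ := Units.mk0 ζ hζne with hζu
      obtain ⟨k, hk0⟩ := hg ζu
      have hk : g ^ k = ζu := hk0
      have hζud : ζu ^ d = 1 := by
        apply Units.ext
        push_cast [hζu]
        exact hζd
      have hgkd : g ^ (k * (d : ℤ)) = 1 := by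
        rw [zpow_mul, hk, zpow_natCast, hζud]
      have hdvdk : ((q - 1 : ℕ) : ℤ) ∣ k * d := by
        rw [← hog]
        exact orderOf_dvd_iff_zpow_eq_one.mpr hgkd
      have hsk : (s : ℤ) ∣ k := by
        obtain ⟨t, ht⟩ := hdvdk
        refine ⟨t, ?_⟩
        have hd0 : (d : ℤ) ≠ 0 := by exact_mod_cast (by omega : d ≠ 0)
        apply mul_right_cancel₀ hd0
        rw [ht, hq1]
        push_cast
        ring
      obtain ⟨t, ht⟩ := hsk
      set c : Fˣ := g ^ t with hc
      have hcs : (c : F) ^ s = ζ := by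
        have : c ^ (s : ℕ) = ζu := by
          rw [hc, ← zpow_natCast, ← zpow_mul, mul_comm, ← ht, hk]
        calc (c : F) ^ s = ((c ^ s : Fˣ) : F) := by push_cast; ring
          _ = ζ := by rw [this]; rfl
      have hfc : (X ^ r * h.comp (X ^ ((q - 1) / d))).eval ((c : F)) =
          (X ^ r * h.comp (X ^ ((q - 1) / d))).eval (0 : F) := by
        rw [hev, hev, hcs, hζ0, mul_zero, zero_pow (by omega : r ≠ 0), zero_mul]
      have := hbij.injective hfc
      exact c.ne_zero this
  · rintro ⟨hgcd, hroots⟩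
    rw [Function.Bijective]
    have hinj : Function.Injective (fun c : F => (X ^ r * h.comp (X ^ ((q - 1) / d))).eval c) := by
      intro a b hab
      simp only [hev] at hab
      have hne : ∀ c : F, c ≠ 0 → h.eval (c ^ s) ≠ 0 := fun c hc =>
        hroots _ (hmuroot c hc)
      rcases eq_or_ne a 0 with rfl | ha
      · rcases eq_or_ne b 0 with rfl | hb
        · rfl
        · exfalso
          rw [zero_pow (by omega : r ≠ 0), zero_mul] at hab
          exact (mul_ne_zero (pow_ne_zero r hb) (hne b hb)) hab.symm
      · rcases eq_or_ne b 0 with rfl | hb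
        · exfalso
          rw [zero_pow (by omega : r ≠ 0), zero_mul] at hab
          exact (mul_ne_zero (pow_ne_zero r ha) (hne a ha)) hab
        · -- both nonzero
          have hevs : ∀ c : F, c ≠ 0 → h.eval (c ^ s) ^ s = 1 := by
            intro c hc
            exact hKpow _ (hevalK _ (hmu _ (hmuroot c hc))) (hne c hc)
          have habs : a ^ (r * s) = b ^ (r * s) := by
            have := congrArg (· ^ s) hab
            simp only [mul_pow] at this
            rw [hevs a ha, hevs b hb, mul_one, mul_one, ← pow_mul, ← pow_mul] at this
            exact this
          set t : F := a / b with htdef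
          have ht0 : t ≠ 0 := div_ne_zero ha hb
          have htrs : t ^ (r * s) = 1 := by
            rw [htdef, div_pow, habs, div_self (pow_ne_zero _ hb)]
          have htq : t ^ (d * s) = 1 := by
            rw [← hq1, ← hq]
            exact FiniteField.pow_card_sub_one_eq_one t ht0
          have hord : orderOf t ∣ s := by
            have h1 : orderOf t ∣ r * s := orderOf_dvd_of_pow_eq_one htrs
            have hh2 : orderOf t ∣ d * s := orderOf_dvd_of_pow_eq_one htq
            have hgd : Nat.gcd (r * s) (d * s) = s := by
              rw [Nat.gcd_mul_right]
              have : Nat.gcd r d = 1 := Nat.Coprime.coprime_dvd_right hds hgcd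
              rw [this, one_mul]
            rw [← hgd]
            exact Nat.dvd_gcd h1 hh2
          have hts : t ^ s = 1 := by
            obtain ⟨w, hw⟩ := hord
            rw [hw, pow_mul, pow_orderOf_eq_one, one_pow]
          have habseq : a ^ s = b ^ s := by
            have : (a / b) ^ s = 1 := hts
            rw [div_pow] at this
            field_simp at this
            exact this
          rw [habseq] at hab
          have habr : a ^ r = b ^ r :=
            mul_right_cancel₀ (hne b hb) hab
          have htr : t ^ r = 1 := by
            rw [htdef, div_pow, habr, div_self (pow_ne_zero _ hb)]
          have : orderOf t ∣ 1 := by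
            rw [← hgcd]
            exact Nat.dvd_gcd (orderOf_dvd_of_pow_eq_one htr) hord
          have ht1 : t = 1 := by
            have := Nat.dvd_one.mp this
            rw [← pow_one t, ← this, pow_orderOf_eq_one]
          rw [htdef, div_eq_one_iff_eq hb] at ht1
          exact ht1
    exact ⟨hinj, Finite.surjective_of_injective hinj⟩
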